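/- Let e be a nonzero idempotent of an admissible Poisson algebra P over a field of characteristic ≠ 2, 3. Then P decomposes as a direct sum P = P_{0,0} ⊕ P_{1,1} where P_{0,0} = {x : e·x = x·e = 0} and P_{1,1} = {x : e·x = x·e = x}. -/
import Mathlib


variable {K : Type*} [Field K] {P : Type*} [AddCommGroup P] [Module K P]

/-- The associator of a bilinear multiplication. -/
def assocOf (m : P →ₗ[K] P →ₗ[K] P) (X Y Z : P) : P := m (m X Y) Z - m X (m Y Z)

/-- Admissible Poisson algebra condition:
`3 A(X,Y,Z) = (X·Z)·Y + (Y·Z)·X - (Y·X)·Z - (Z·X)·Y`. -/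
def IsAdmissible (m : P →ₗ[K] P →ₗ[K] P) : Prop :=
  ∀ X Y Z : P, (3 : ℤ) • assocOf m X Y Z =
    m (m X Z) Y + m (m Y Z) X - m (m Y X) Z - m (m Z X) Y

/-- The antisymmetrized bracket `{X,Y} = (X·Y - Y·X)/2`. -/
def brOf (m : P →ₗ[K] P →ₗ[K] P) (X Y : P) : P := (2 : K)⁻¹ • (m X Y - m Y X)

/-- The symmetrized product `X∙Y = (X·Y + Y·X)/2`. -/
def bulOf (m : P →ₗ[K] P →ₗ[K] P) (X Y : P) : P := (2 : K)⁻¹ • (m X Y + m Y X)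

/-- Pierce decomposition. For a nonzero idempotent `e` of an
admissible Poisson algebra, `P = P₀₀ ⊕ P₁₁`: every element decomposes uniquely
as a sum of an element of `P₀₀ = {x : e·x = x·e = 0}` and an element of
`P₁₁ = {x : e·x = x·e = x}`. -/
theorem stmt10 (h2 : (2 : K) ≠ 0) (h3 : (3 : K) ≠ 0)
    (m : P →ₗ[K] P →ₗ[K] P) (hm : IsAdmissible m)
    (e : P) (he0 : e ≠ 0) (he : m e e = e) :
    ∀ x : P, ∃! p : P × P,
      (m e p.1 = 0 ∧ m p.1 e = 0) ∧ (m e p.2 = p.2 ∧ m p.2 e = p.2) ∧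
        x = p.1 + p.2 := by
  have hcomm : ∀ v : P, m v e = m e v := by
    intro v
    have h1 := hm v e e
    have h1L := hm (m e v) e e
    have h1R := hm (m v e) e e
    have hb := hm e v e
    have hbL := hm e (m e v) e
    have hc := hm e e v
    have hcR := hm e e (m v e)
    simp only [assocOf, he] at h1 h1L h1R hb hbL hc hcR
    have Rh1 := congrArg (m.flip e) h1
    have Lhb := congrArg (m e) hb
    simp only [map_add, map_sub, map_zsmul, LinearMap.flip_apply] at Rh1 Lhb
    have hz : (3 : K) • m v e = (3 : K) • m e v := by
      linear_combination (norm := module) (-1 : K) • h1 + (3 : K) • h1L +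
        (2 : K) • h1R + (-3 : K) • Rh1 + (2 : K) • hb + (-2 : K) • hbL +
        (-2 : K) • Lhb + (-1 : K) • hc + (2 : K) • hcR
    exact smul_right_injective P h3 hz
  have h4 : (4 : K) ≠ 0 := by
    have := mul_ne_zero h2 h2
    norm_num at this
    exact_mod_cast this
  have hidem : ∀ v : P, m e (m e v) = m e v := by
    intro v
    have h1 := hm v e e
    simp only [assocOf, he] at h1
    simp only [hcomm] at h1
    have hz : (4 : K) • m e (m e v) = (4 : K) • m e v := by
      linear_combination (norm := module) (1 : K) • h1
    exact smul_right_injective P h4 hz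
  intro x
  refine ⟨(x - m e x, m e x), ⟨⟨?_, ?_⟩, ⟨?_, ?_⟩, ?_⟩, ?_⟩
  · rw [map_sub, hidem, sub_self]
  · rw [hcomm, map_sub, hidem, sub_self]
  · exact hidem x
  · rw [hcomm]; exact hidem x
  · module
  · rintro ⟨q1, q2⟩ ⟨⟨hq1, -⟩, ⟨hq2, -⟩, hsum⟩
    have hq2' : q2 = m e x := by
      rw [hsum, map_add, hq1, zero_add, hq2]
    have hq1' : q1 = x - m e x := by
      rw [← hq2', hsum]; module
    exact Prod.ext hq1' hq2'
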